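/- For every m ≥ 1, the projection map π_m: Q_m → Q_{m−1} is surjective. -/

import Mathlib

open Finset
noncomputable section
attribute [local instance] Classical.propDecidable

abbrev Letter (k : ℕ) := Fin k × Bool

def linv {k : ℕ} (x : Letter k) : Letter k := (x.1, !x.2)

/-- `w` is a freely reduced word: no letter is followed by its inverse. -/
def Reduced {k : ℕ} (w : List (Letter k)) : Prop :=
  ∀ i < w.length, w[i + 1]? ≠ (w[i]?).map linv

/-- `w` is cyclically reduced. -/
def CyclRed {k : ℕ} (w : List (Letter k)) : Prop := Reduced (w ++ w)

/-- `w` and `w'` define the same cyclic word. -/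
def CyclEq {k : ℕ} (w w' : List (Letter k)) : Prop := ∃ n, w' = w.rotate n

/-- the word `u` occurs in the cyclic word of `w` starting at position `i` (with wrap-around). -/
def occursAt {k : ℕ} (w u : List (Letter k)) (i : ℕ) : Prop :=
  ∀ j < u.length, w[(i + j) % w.length]? = u[j]?

/-- the number `n_w(u)` of cyclic occurrences of `u` in the cyclic word `w`. -/
def cyclCount {k : ℕ} (w u : List (Letter k)) : ℕ :=
  ((Finset.range w.length).filter (occursAt w u)).card

/-- the frequency `f_w(u) = n_w(u)/‖w‖`. -/
def freq {k : ℕ} (w u : List (Letter k)) : ℚ := (cyclCount w u : ℚ) / (w.length : ℚ)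

/-- the finite set of freely reduced words of length `m`. -/
def WordsM (k m : ℕ) : Finset (List (Letter k)) :=
  ((Finset.univ : Finset (Fin m → Letter k)).image fun f => List.ofFn f).filter
    (fun w => Reduced w)

/-- the polyhedron `Q_m`, realized as functions supported on reduced words of length `m`. -/
def Qset (k m : ℕ) : Set (List (Letter k) → ℝ) :=
  {q | (∀ v, ¬(Reduced v ∧ v.length = m) → q v = 0) ∧
       (∀ v, 0 ≤ q v) ∧
       (∑ v ∈ WordsM k m, q v = 1) ∧
       ∀ u : List (Letter k), Reduced u → u.length = m - 1 →
         (∑ x ∈ Finset.univ.filter (fun x : Letter k => Reduced (u ++ [x])), q (u ++ [x])) =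
         (∑ x ∈ Finset.univ.filter (fun x : Letter k => Reduced (x :: u)), q (x :: u)) }

/-- the projection `π_m : Q_m → Q_{m-1}`. -/
def proj (k m : ℕ) (q : List (Letter k) → ℝ) : List (Letter k) → ℝ :=
  fun u => if Reduced u ∧ u.length = m - 1 then
    ∑ x ∈ Finset.univ.filter (fun x : Letter k => Reduced (u ++ [x])), q (u ++ [x]) else 0


-- aux lemmas
lemma linv_linv {k : ℕ} (x : Letter k) : linv (linv x) = x := by simp [linv]
lemma linv_ne_self {k : ℕ} (x : Letter k) : linv x ≠ x := by
  simp [linv, Prod.ext_iff]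

section red
variable {k : ℕ}

lemma reduced_iff (w : List (Letter k)) :
    Reduced w ↔ w.IsChain (fun a b => b ≠ linv a) := by
  rw [List.isChain_iff_getElem]
  constructor
  · intro h i hi
    have h2 : i < w.length := by omega
    have h3 : i + 1 < w.length := by omega
    have := h i h2
    rw [List.getElem?_eq_getElem h3, List.getElem?_eq_getElem h2] at this
    simpa using this
  · intro h i hi
    by_cases h2 : i + 1 < w.length
    · have := h i (by omega)
      rw [List.getElem?_eq_getElem h2, List.getElem?_eq_getElem hi]
      simpa using this
    · rw [List.getElem?_eq_none (by omega : w.length ≤ i + 1)]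
      simp [List.getElem?_eq_getElem hi]

lemma reduced_concat {u : List (Letter k)} {x : Letter k} :
    Reduced (u ++ [x]) ↔ Reduced u ∧ ∀ a ∈ u.getLast?, x ≠ linv a := by
  simp only [reduced_iff, List.isChain_append, List.isChain_singleton, true_and]
  simp

lemma reduced_cons {u : List (Letter k)} {x : Letter k} :
    Reduced (x :: u) ↔ (∀ a ∈ u.head?, a ≠ linv x) ∧ Reduced u := by
  simp only [reduced_iff, List.isChain_cons]

lemma reduced_singleton (x : Letter k) : Reduced [x] := by simp [reduced_iff]

lemma reduced_nil : Reduced ([] : List (Letter k)) := by simp [reduced_iff]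

lemma reduced_pair {x y : Letter k} : Reduced [x, y] ↔ y ≠ linv x := by
  simp [reduced_cons, reduced_singleton, reduced_nil]

lemma reduced_tail {u : List (Letter k)} (h : Reduced u) : Reduced u.tail := by
  rcases u with _ | ⟨a, r⟩
  · exact h
  · rw [reduced_cons] at h; exact h.2

lemma reduced_dropLast {u : List (Letter k)} (h : Reduced u) : Reduced u.dropLast := by
  rcases eq_or_ne u [] with rfl | hne
  · exact h
  · rw [← List.dropLast_append_getLast hne, reduced_concat] at h
    exact h.1

lemma mem_wordsM {m : ℕ} {v : List (Letter k)} :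
    v ∈ WordsM k m ↔ Reduced v ∧ v.length = m := by
  simp only [WordsM, Finset.mem_filter, Finset.mem_image, Finset.mem_univ, true_and]
  constructor
  · rintro ⟨⟨f, rfl⟩, h⟩; exact ⟨h, by simp⟩
  · rintro ⟨h, rfl⟩
    exact ⟨⟨fun i => v[(i : ℕ)], List.ofFn_getElem (xs := v)⟩, h⟩

lemma getLast?_tail₂ {u : List (Letter k)} (h : 2 ≤ u.length) :
    u.tail.getLast? = u.getLast? := by
  rcases u with _ | ⟨a, _ | ⟨b, r⟩⟩ <;> simp at h ⊢

lemma head?_dropLast₂ {t : List (Letter k)} (h : 2 ≤ t.length) :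
    t.dropLast.head? = t.head? := by
  rcases t with _ | ⟨a, _ | ⟨b, r⟩⟩ <;> simp at h ⊢

lemma tail_concat {u : List (Letter k)} {y : Letter k} (h : u ≠ []) :
    (u ++ [y]).tail = u.tail ++ [y] := by
  rcases u with _ | ⟨a, r⟩
  · exact absurd rfl h
  · simp

lemma dropLast_cons' {t : List (Letter k)} {x : Letter k} (h : t ≠ []) :
    (x :: t).dropLast = x :: t.dropLast := by
  rcases t with _ | ⟨a, r⟩
  · exact absurd rfl h
  · simp

lemma filter_concat_tail {u : List (Letter k)} (hu : Reduced u) (h2 : 2 ≤ u.length) :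
    Finset.univ.filter (fun y : Letter k => Reduced (u ++ [y])) =
      Finset.univ.filter (fun y : Letter k => Reduced (u.tail ++ [y])) := by
  apply Finset.filter_congr
  intro y _
  rw [reduced_concat, reduced_concat, getLast?_tail₂ h2]
  simp [hu, reduced_tail hu]

lemma filter_cons_dropLast {t : List (Letter k)} (ht : Reduced t) (h2 : 2 ≤ t.length) :
    Finset.univ.filter (fun x : Letter k => Reduced (x :: t)) =
      Finset.univ.filter (fun x : Letter k => Reduced (x :: t.dropLast)) := by
  apply Finset.filter_congr
  intro x _
  rw [reduced_cons, reduced_cons, head?_dropLast₂ h2]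
  simp [ht, reduced_dropLast ht]

lemma sum_wordsM_succ {m : ℕ} (f : List (Letter k) → ℝ) :
    ∑ v ∈ WordsM k (m + 1), f v =
      ∑ u ∈ WordsM k m, ∑ x ∈ Finset.univ.filter
        (fun x : Letter k => Reduced (u ++ [x])), f (u ++ [x]) := by
  rw [Finset.sum_sigma']
  refine (Finset.sum_bij' (fun a _ => a.1 ++ [a.2])
    (fun v hv => ⟨v.dropLast, v.getLast (by
      intro h; rw [mem_wordsM] at hv; simp [h] at hv)⟩) ?_ ?_ ?_ ?_ ?_).symm
  · rintro ⟨u, x⟩ ha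
    rw [Finset.mem_sigma, mem_wordsM, Finset.mem_filter] at ha
    rw [mem_wordsM]
    exact ⟨ha.2.2, by simp [ha.1.2]⟩
  · intro v hv
    rw [mem_wordsM] at hv
    have hne : v ≠ [] := by intro h; simp [h] at hv
    rw [Finset.mem_sigma, mem_wordsM, Finset.mem_filter]
    refine ⟨⟨?_, by simp [hv.2]⟩, Finset.mem_univ _, ?_⟩
    · have := hv.1
      rw [← List.dropLast_append_getLast hne, reduced_concat] at this
      exact this.1
    · rw [List.dropLast_append_getLast hne]; exact hv.1
  · rintro ⟨u, x⟩ ha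
    congr 1 <;> simp [List.dropLast_concat]
  · intro v hv
    exact List.dropLast_append_getLast _
  · rintro ⟨u, x⟩ ha; rfl

lemma sum_wordsM_one (f : List (Letter k) → ℝ) :
    ∑ v ∈ WordsM k 1, f v = ∑ x : Letter k, f [x] := by
  refine (Finset.sum_bij' (fun (x : Letter k) _ => [x])
    (fun v hv => v.head (by intro h; rw [mem_wordsM] at hv; simp [h] at hv))
    ?_ ?_ ?_ ?_ ?_).symm
  · intro x _; rw [mem_wordsM]; exact ⟨reduced_singleton x, rfl⟩
  · intro v hv; exact Finset.mem_univ _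
  · intro x _; rfl
  · intro v hv
    rw [mem_wordsM] at hv
    match v, hv.2 with
    | [x], _ => rfl
  · intro x _; rfl

lemma wordsM_zero : WordsM k 0 = {([] : List (Letter k))} := by
  ext v; rw [mem_wordsM]
  simp [List.length_eq_zero_iff, reduced_nil, and_comm]
  intro h; subst h; exact reduced_nil
end red

lemma case_one {k : ℕ} (hk : 2 ≤ k) (p : List (Letter k) → ℝ) (hp : p ∈ Qset k 0) :
    ∃ q ∈ Qset k 1, proj k 1 q = p := by
  obtain ⟨hp0, hpnn, hp1, _⟩ := hp
  have hpnil : p [] = 1 := by rwa [wordsM_zero, Finset.sum_singleton] at hp1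
  set q : List (Letter k) → ℝ := fun v => if Reduced v ∧ v.length = 1 then (2 * k : ℝ)⁻¹ else 0
    with hq
  have hq1 : ∀ x : Letter k, q [x] = (2 * k : ℝ)⁻¹ := fun x =>
    if_pos ⟨reduced_singleton x, rfl⟩
  have hk0 : (2 * k : ℝ) ≠ 0 := by positivity
  have hcard : (Fintype.card (Letter k) : ℝ) = 2 * k := by
    simp [Fintype.card_prod, mul_comm]
  have hfull : Finset.univ.filter (fun x : Letter k => Reduced ([x])) =
      (Finset.univ : Finset (Letter k)) := by
    rw [Finset.filter_true_of_mem]; intro x _; exact reduced_singleton x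
  have huniv : ∑ x : Letter k, q [x] = 1 := by
    rw [Finset.sum_congr rfl (fun x _ => hq1 x), Finset.sum_const, Finset.card_univ,
      nsmul_eq_mul, hcard]
    exact mul_inv_cancel₀ hk0
  have hrow : ∑ x ∈ Finset.univ.filter
      (fun x : Letter k => Reduced (([] : List (Letter k)) ++ [x])), q ([] ++ [x]) = 1 := by
    simp only [List.nil_append]
    rw [hfull]
    exact huniv
  refine ⟨q, ⟨fun v hv => if_neg hv, fun v => ?_, ?_, ?_⟩, ?_⟩
  · rw [hq]; dsimp only; split
    · positivity
    · exact le_refl 0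
  · rw [sum_wordsM_one]
    exact huniv
  · intro u hu hlen
    have : u = [] := List.length_eq_zero_iff.mp hlen
    subst this
    rfl
  · funext u
    rw [proj]
    split
    · next h =>
      obtain ⟨hu, hlen⟩ := h
      have : u = [] := List.length_eq_zero_iff.mp (by simpa using hlen)
      subst this
      rw [hrow, hpnil]
    · next h =>
      exact (hp0 u (by simpa using h)).symm

lemma erase_filter_pair {k : ℕ} (x : Letter k) :
    Finset.univ.filter (fun y : Letter k => Reduced [x, y]) =
      Finset.univ.erase (linv x) := by
  ext y
  simp [reduced_pair]

lemma linv_ne_iff {k : ℕ} {x y : Letter k} : y ≠ linv x ↔ x ≠ linv y := by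
  constructor <;> · intro h h2; subst h2; exact h (linv_linv _).symm

lemma erase_filter_pair' {k : ℕ} (y : Letter k) :
    Finset.univ.filter (fun x : Letter k => Reduced [x, y]) =
      Finset.univ.erase (linv y) := by
  ext x
  simp [reduced_pair, linv_ne_iff]

lemma case_two {k : ℕ} (hk : 2 ≤ k) (p : List (Letter k) → ℝ) (hp : p ∈ Qset k 1) :
    ∃ q ∈ Qset k 2, proj k 2 q = p := by
  obtain ⟨hp0, hpnn, hp1, _⟩ := hp
  have hsum1 : ∑ x : Letter k, p [x] = 1 := by rw [← sum_wordsM_one]; exact hp1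
  set g : Letter k → Letter k → ℝ :=
    fun x y => if y = x then p [x] * (p [x] + p [linv x]) else p [x] * p [y] with hg
  have hgnn : ∀ x y, 0 ≤ g x y := by
    intro x y
    rw [hg]; dsimp only; split
    · have := hpnn [x]; have := hpnn [linv x]; positivity
    · exact mul_nonneg (hpnn _) (hpnn _)
  set q : List (Letter k) → ℝ := fun v =>
    if Reduced v ∧ v.length = 2 then
      (match v with
      | x :: y :: _ => g x y
      | _ => 0)
    else 0 with hqdef
  have hqval : ∀ x y : Letter k, Reduced [x, y] → q [x, y] = g x y := by
    intro x y h
    rw [hqdef]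
    exact if_pos ⟨h, rfl⟩
  -- generic partial-sum helper
  have hpartial : ∀ z : Letter k,
      ∑ y ∈ (Finset.univ.erase (linv z)).erase z, p [y] = 1 - p [linv z] - p [z] := by
    intro z
    have h1 : p [linv z] + ∑ y ∈ Finset.univ.erase (linv z), p [y] = 1 := by
      rw [Finset.add_sum_erase Finset.univ (fun y => p [y]) (Finset.mem_univ (linv z))]
      exact hsum1
    have hz : z ∈ Finset.univ.erase (linv z) :=
      Finset.mem_erase.2 ⟨fun h => linv_ne_self z h.symm, Finset.mem_univ z⟩
    have h2 : p [z] + ∑ y ∈ (Finset.univ.erase (linv z)).erase z, p [y] =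
        ∑ y ∈ Finset.univ.erase (linv z), p [y] := Finset.add_sum_erase _ (fun y => p [y]) hz
    linarith
  have hrowg : ∀ x : Letter k, ∑ y ∈ Finset.univ.erase (linv x), g x y = p [x] := by
    intro x
    have hx : x ∈ Finset.univ.erase (linv x) :=
      Finset.mem_erase.2 ⟨fun h => linv_ne_self x h.symm, Finset.mem_univ x⟩
    rw [← Finset.add_sum_erase _ (g x) hx]
    have hterm : ∀ y ∈ (Finset.univ.erase (linv x)).erase x, g x y = p [x] * p [y] := by
      intro y hy
      rw [hg]; dsimp only
      rw [if_neg (Finset.mem_erase.1 hy).1]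
    rw [Finset.sum_congr rfl hterm, ← Finset.mul_sum, hpartial x]
    have hgxx : g x x = p [x] * (p [x] + p [linv x]) := if_pos rfl
    rw [hgxx]; ring
  have hcolg : ∀ y : Letter k, ∑ x ∈ Finset.univ.erase (linv y), g x y = p [y] := by
    intro y
    have hy : y ∈ Finset.univ.erase (linv y) :=
      Finset.mem_erase.2 ⟨fun h => linv_ne_self y h.symm, Finset.mem_univ y⟩
    rw [← Finset.add_sum_erase _ (fun x => g x y) hy]
    have hterm : ∀ x ∈ (Finset.univ.erase (linv y)).erase y, g x y = p [x] * p [y] := by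
      intro x hx
      rw [hg]; dsimp only
      rw [if_neg]
      intro h; exact (Finset.mem_erase.1 hx).1 h.symm
    rw [Finset.sum_congr rfl hterm]
    have : ∑ x ∈ (Finset.univ.erase (linv y)).erase y, p [x] * p [y] =
        (1 - p [linv y] - p [y]) * p [y] := by
      rw [← Finset.sum_mul, hpartial y]
    rw [this]
    have hgyy : g y y = p [y] * (p [y] + p [linv y]) := if_pos rfl
    rw [hgyy]; ring
  -- row sums in the q form
  have hrow : ∀ x : Letter k,
      ∑ y ∈ Finset.univ.filter (fun y : Letter k => Reduced ([x] ++ [y])), q ([x] ++ [y]) =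
        p [x] := by
    intro x
    simp only [List.singleton_append]
    rw [show (Finset.univ.filter (fun y : Letter k => Reduced [x, y])) =
        Finset.univ.erase (linv x) from erase_filter_pair x]
    rw [← hrowg x]
    apply Finset.sum_congr rfl
    intro y hy
    have : Reduced [x, y] := reduced_pair.2 (Finset.mem_erase.1 hy).1
    exact hqval x y this
  have hcol : ∀ y : Letter k,
      ∑ x ∈ Finset.univ.filter (fun x : Letter k => Reduced (x :: [y])), q (x :: [y]) =
        p [y] := by
    intro y
    rw [show (Finset.univ.filter (fun x : Letter k => Reduced [x, y])) =
        Finset.univ.erase (linv y) from erase_filter_pair' y]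
    rw [← hcolg y]
    apply Finset.sum_congr rfl
    intro x hx
    have hxy : x ≠ linv y := (Finset.mem_erase.1 hx).1
    have : Reduced [x, y] := reduced_pair.2 (linv_ne_iff.2 hxy)
    exact hqval x y this
  refine ⟨q, ⟨fun v hv => if_neg hv, fun v => ?_, ?_, ?_⟩, ?_⟩
  · rw [hqdef]; dsimp only; split
    · match v with
      | x :: y :: _ => exact hgnn x y
      | [] => exact le_refl 0
      | [_] => exact le_refl 0
    · exact le_refl 0
  · rw [show (2 : ℕ) = 1 + 1 from rfl, sum_wordsM_succ, sum_wordsM_one]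
    rw [Finset.sum_congr rfl (fun x _ => hrow x)]
    exact hsum1
  · intro u hu hlen
    match u, hlen with
    | [x], _ => rw [hrow x, hcol x]
  · funext u
    rw [proj]
    split
    · next h =>
      match u, h.2 with
      | [x], _ => exact hrow x
    · next h =>
      exact (hp0 u (by simpa using h)).symm

lemma case_ge2 {k n : ℕ} (hn : 2 ≤ n) (p : List (Letter k) → ℝ) (hp : p ∈ Qset k n) :
    ∃ q ∈ Qset k (n + 1), proj k (n + 1) q = p := by
  obtain ⟨hp0, hpnn, hp1, hpflow⟩ := hp
  set S : List (Letter k) → ℝ := fun w =>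
    ∑ y ∈ Finset.univ.filter (fun y : Letter k => Reduced (w ++ [y])), p (w ++ [y]) with hS
  have hSnn : ∀ w, 0 ≤ S w := fun w => Finset.sum_nonneg (fun y _ => hpnn _)
  set q : List (Letter k) → ℝ := fun v =>
    if Reduced v ∧ v.length = n + 1 then
      p v.dropLast * p v.tail / S v.tail.dropLast
    else 0 with hq
  have hqnn : ∀ v, 0 ≤ q v := by
    intro v
    rw [hq]; dsimp only; split
    · exact div_nonneg (mul_nonneg (hpnn _) (hpnn _)) (hSnn _)
    · exact le_refl 0
  -- row sums
  have hrow : ∀ u : List (Letter k), Reduced u → u.length = n →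
      ∑ y ∈ Finset.univ.filter (fun y : Letter k => Reduced (u ++ [y])), q (u ++ [y]) =
        p u := by
    intro u hu hlen
    have hune : u ≠ [] := by intro h; rw [h] at hlen; simp at hlen; omega
    have hu2 : 2 ≤ u.length := by omega
    have htail : Reduced u.tail := reduced_tail hu
    have htlen : u.tail.length = n - 1 := by
      rw [List.length_tail, hlen]
    have hqval : ∀ y, Reduced (u ++ [y]) →
        q (u ++ [y]) = p u * p (u.tail ++ [y]) / S u.tail := by
      intro y hy
      rw [hq]; dsimp only
      rw [if_pos ⟨hy, by simp [hlen]⟩]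
      rw [List.dropLast_concat, tail_concat hune, List.dropLast_concat]
    rw [Finset.sum_congr rfl (fun y hy => hqval y (Finset.mem_filter.1 hy).2)]
    rw [filter_concat_tail hu hu2]
    have hsum : ∑ y ∈ Finset.univ.filter (fun y : Letter k => Reduced (u.tail ++ [y])),
        p u * p (u.tail ++ [y]) / S u.tail = p u * S u.tail / S u.tail := by
      rw [← Finset.sum_div, ← Finset.mul_sum]
    rw [hsum]
    by_cases hS0 : S u.tail = 0
    · have hflow := hpflow u.tail htail (by rw [htlen])
      have : ∑ x ∈ Finset.univ.filter (fun x : Letter k => Reduced (x :: u.tail)),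
          p (x :: u.tail) = 0 := by rw [← hflow]; exact hS0
      have hz := (Finset.sum_eq_zero_iff_of_nonneg (fun x _ => hpnn _)).1 this
      have hpu : p u = 0 := by
        rcases u with _ | ⟨a, r⟩
        · exact absurd rfl hune
        · exact hz a (Finset.mem_filter.2 ⟨Finset.mem_univ _, hu⟩)
      rw [hS0, hpu]; simp
    · rw [mul_div_assoc, div_self hS0, mul_one]
  -- column sums
  have hcol : ∀ t : List (Letter k), Reduced t → t.length = n →
      ∑ x ∈ Finset.univ.filter (fun x : Letter k => Reduced (x :: t)), q (x :: t) = p t := by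
    intro t ht hlen
    have htne : t ≠ [] := by intro h; rw [h] at hlen; simp at hlen; omega
    have ht2 : 2 ≤ t.length := by omega
    have hdrop : Reduced t.dropLast := reduced_dropLast ht
    have hdlen : t.dropLast.length = n - 1 := by
      rw [List.length_dropLast, hlen]
    have hqval : ∀ x, Reduced (x :: t) →
        q (x :: t) = p (x :: t.dropLast) * p t / S t.dropLast := by
      intro x hx
      rw [hq]; dsimp only
      rw [if_pos ⟨hx, by simp [hlen]⟩]
      rw [dropLast_cons' htne]
      rfl
    rw [Finset.sum_congr rfl (fun x hx => hqval x (Finset.mem_filter.1 hx).2)]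
    rw [filter_cons_dropLast ht ht2]
    have hsum : ∑ x ∈ Finset.univ.filter (fun x : Letter k => Reduced (x :: t.dropLast)),
        p (x :: t.dropLast) * p t / S t.dropLast =
        (∑ x ∈ Finset.univ.filter (fun x : Letter k => Reduced (x :: t.dropLast)),
          p (x :: t.dropLast)) * p t / S t.dropLast := by
      rw [← Finset.sum_div, ← Finset.sum_mul]
    rw [hsum]
    have hflow := hpflow t.dropLast hdrop (by rw [hdlen])
    rw [← hflow]
    have hfold : (∑ y ∈ Finset.univ.filter
        (fun y : Letter k => Reduced (t.dropLast ++ [y])), p (t.dropLast ++ [y])) =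
        S t.dropLast := rfl
    rw [hfold]
    by_cases hS0 : S t.dropLast = 0
    · have hz := (Finset.sum_eq_zero_iff_of_nonneg (fun y _ => hpnn _)).1
        (hfold.trans hS0)
      have hpt : p t = 0 := by
        have hmem : t.getLast htne ∈ Finset.univ.filter
            (fun y : Letter k => Reduced (t.dropLast ++ [y])) := by
          refine Finset.mem_filter.2 ⟨Finset.mem_univ _, ?_⟩
          rw [List.dropLast_append_getLast htne]; exact ht
        have := hz _ hmem
        rwa [List.dropLast_append_getLast htne] at this
      rw [hpt, hS0]; simp
    · rw [mul_comm, mul_div_assoc, div_self hS0, mul_one]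
  refine ⟨q, ⟨fun v hv => if_neg hv, hqnn, ?_, ?_⟩, ?_⟩
  · rw [sum_wordsM_succ]
    rw [Finset.sum_congr rfl (fun u hu => hrow u (mem_wordsM.1 hu).1 (mem_wordsM.1 hu).2)]
    exact hp1
  · intro t ht hlen
    have hlen' : t.length = n := by simpa using hlen
    rw [hrow t ht hlen', hcol t ht hlen']
  · funext u
    rw [proj]
    split
    · next h => exact hrow u h.1 (by simpa using h.2)
    · next h => exact (hp0 u (by simpa using h)).symm


theorem stmt5 (k m : ℕ) (hk : 2 ≤ k) (hm : 1 ≤ m) (p : List (Letter k) → ℝ)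
    (hp : p ∈ Qset k (m - 1)) : ∃ q ∈ Qset k m, proj k m q = p := by
  obtain ⟨n, rfl⟩ : ∃ n, m = n + 1 := ⟨m - 1, by omega⟩
  simp only [Nat.add_sub_cancel] at hp
  match n, hp with
  | 0, hp => exact case_one hk p hp
  | 1, hp => exact case_two hk p hp
  | (n + 2), hp => exact case_ge2 (by omega) p hp

end
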